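/- Let n ≥ 6, r ≥ 1, and 2 ≤ k ≤ n-4. Then HS_k(I(LH_{n,r}^c)) does not have linear quotients. -/

import Mathlib

open Finset

/-- Edge relation of the graph `Hₙ` (one orientation). -/
def HE (n a b : ℕ) : Prop :=
  (1 ≤ a ∧ a ≤ n - 5 ∧ b = a + 1) ∨
  (a = n - 4 ∧ b = n - 2) ∨ (a = n - 2 ∧ b = n - 3) ∨
  (a = n - 1 ∧ 2 ≤ b ∧ b ≤ n ∧ b ≠ n - 1) ∨
  (a = n ∧ 1 ≤ b ∧ b ≤ n ∧ b ≠ n - 3 ∧ b ≠ n)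

/-- Edge relation of the graph `Hₙ` (symmetrized). -/
def Hedge (n a b : ℕ) : Prop := HE n a b ∨ HE n b a

def LHE (n r a b : ℕ) : Prop :=
  (n + 1 ≤ a ∧ a ≤ n + r ∧ 1 ≤ b ∧ b ≤ n ∧ b ≠ n - 3) ∨
  (n + 1 ≤ a ∧ a ≤ n + r ∧ n + 1 ≤ b ∧ b ≤ n + r ∧ a ≠ b)

/-- Edge relation of `LH_{n,r}`. -/
def LHedge (n r a b : ℕ) : Prop := Hedge n a b ∨ LHE n r a b ∨ LHE n r b a

/-- Edge relation of `CH_{n,r}`: a shifted copy of `Hₙ` on `{r+1,…,r+n}`,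
a clique on `{1,…,r}`, each clique vertex joined to `x_{r+n-1}` and `x_{r+n}`. -/
def CHedge (n r a b : ℕ) : Prop :=
  (r < a ∧ r < b ∧ Hedge n (a - r) (b - r)) ∨
  (1 ≤ a ∧ a ≤ r ∧ 1 ≤ b ∧ b ≤ r ∧ a ≠ b) ∨
  (1 ≤ a ∧ a ≤ r ∧ (b = r + n - 1 ∨ b = r + n)) ∨
  (1 ≤ b ∧ b ≤ r ∧ (a = r + n - 1 ∨ a = r + n))

/-- Edge relation of `ACH_{n,r}`: `CH_{n,r}` plus edges from `{1,…,r}` to `x_{r+n-2}`. -/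
def ACHedge (n r a b : ℕ) : Prop :=
  CHedge n r a b ∨ (1 ≤ a ∧ a ≤ r ∧ b = r + n - 2) ∨ (1 ≤ b ∧ b ≤ r ∧ a = r + n - 2)

/-- Minimal generators (as squarefree supports) of the `k`-th homological shift ideal
`HS_k(I(G^c))` of the edge ideal of the complement of a graph `G` with edge relation `E`
on vertex set `V`, whose natural order is a perfect elimination ordering
(Herzog–Moradi–Rahimbeigi–Zhu description). -/
def hsGens (E : ℕ → ℕ → Prop) (V : Finset ℕ) (k : ℕ) : Set (Finset ℕ) :=
  {h | h ⊆ V ∧ h.card = k + 2 ∧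
    ∃ t ∈ h, (∃ l ∈ h, t < l) ∧ ∀ l ∈ h, t < l → ¬ E t l}

/-- The successive-colon (linear quotients) condition for a given ordering of the
minimal generators of a squarefree monomial ideal generated in one degree. -/
def LQList (L : List (Finset ℕ)) : Prop :=
  ∀ i j : Fin L.length, i < j →
    ∃ p : Fin L.length, p < j ∧ ∃ v : ℕ,
      L.get p \ L.get j = {v} ∧ v ∈ L.get i \ L.get j

/-- A finite set of squarefree monomials (generators of an equigenerated monomial ideal)
has linear quotients: some linear order of the generators works. -/
def HasLQ (S : Set (Finset ℕ)) : Prop :=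
  ∃ L : List (Finset ℕ), L.Nodup ∧ (∀ h, h ∈ L ↔ h ∈ S) ∧ LQList L

/-- `g >_lex f` for squarefree monomials with variable order `x₁ > x₂ > ⋯`. -/
def lexGt (g f : Finset ℕ) : Prop :=
  List.Lex (· < ·) (g.sort (· ≤ ·)) (f.sort (· ≤ ·))

def fmax (h : Finset ℕ) : ℕ := h.sup id
noncomputable def fmin (h : Finset ℕ) : ℕ := sInf (↑h : Set ℕ)
def smax (h : Finset ℕ) : ℕ := (h.erase (fmax h)).sup id

/-- The natural order on vertices is a perfect elimination ordering. -/
def IsPEO (E : ℕ → ℕ → Prop) (V : Finset ℕ) : Prop :=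
  ∀ i ∈ V, ∀ j ∈ V, ∀ l ∈ V, i < j → i < l → j ≠ l → E i j → E i l → E j l

/-- A graph on `V` is chordal iff some relabeling of the vertices is a perfect
elimination ordering. -/
def ChordalOn (E : ℕ → ℕ → Prop) (V : Finset ℕ) : Prop :=
  ∃ π : ℕ → ℕ, Set.BijOn π ↑V ↑V ∧ IsPEO (fun a b => E (π a) (π b)) V


section AuxLQ

/-- Vertex set `{1} ∪ {3,…,k} ∪ {n-3, n-2, n-1}`. -/
def uSet (n k : ℕ) : Finset ℕ :=
  insert 1 (insert (n-3) (insert (n-2) (insert (n-1) (Finset.Icc 3 k))))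

/-- Vertex set `{1} ∪ {3,…,k} ∪ {n-3, n, n+1}`. -/
def wSet (n k : ℕ) : Finset ℕ :=
  insert 1 (insert (n-3) (insert n (insert (n+1) (Finset.Icc 3 k))))

lemma mem_uSet {n k a : ℕ} :
    a ∈ uSet n k ↔ a = 1 ∨ a = n-3 ∨ a = n-2 ∨ a = n-1 ∨ (3 ≤ a ∧ a ≤ k) := by
  simp [uSet, Finset.mem_insert, Finset.mem_Icc]

lemma mem_wSet {n k a : ℕ} :
    a ∈ wSet n k ↔ a = 1 ∨ a = n-3 ∨ a = n ∨ a = n+1 ∨ (3 ≤ a ∧ a ≤ k) := by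
  simp [wSet, Finset.mem_insert, Finset.mem_Icc]

lemma adjN (n r a : ℕ) (h1 : 1 ≤ a) (h2 : a ≤ n) (h3 : a ≠ n-3) (h4 : a ≠ n) :
    LHedge n r a n :=
  Or.inl (Or.inr (Or.inr (Or.inr (Or.inr (Or.inr ⟨rfl, h1, h2, h3, h4⟩)))))

lemma adjN1 (n r a : ℕ) (hr : 1 ≤ r) (h1 : 1 ≤ a) (h2 : a ≤ n) (h3 : a ≠ n-3) :
    LHedge n r a (n+1) :=
  Or.inr (Or.inr (Or.inl ⟨le_refl _, by omega, h1, h2, h3⟩))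

lemma adj32 (n r : ℕ) : LHedge n r (n-3) (n-2) :=
  Or.inl (Or.inr (Or.inr (Or.inr (Or.inl ⟨rfl, rfl⟩))))

lemma adj31 (n r : ℕ) (hn : 6 ≤ n) : LHedge n r (n-3) (n-1) :=
  Or.inl (Or.inr (Or.inr (Or.inr (Or.inr (Or.inl ⟨rfl, by omega, by omega, by omega⟩)))))

set_option maxHeartbeats 1000000 in
lemma nadj1 (n r l : ℕ) (hn : 6 ≤ n) (h1 : 3 ≤ l) (h2 : l ≤ n-1) : ¬ LHedge n r 1 l := by
  obtain ⟨m, rfl⟩ : ∃ m, n = m + 6 := ⟨n - 6, by omega⟩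
  simp only [LHedge, Hedge, HE, LHE, true_and, and_true, false_and, and_false, true_or,
    or_true, false_or, or_false, ne_eq, not_true, not_false_eq_true] <;> omega

set_option maxHeartbeats 1000000 in
lemma nadj3 (n r l : ℕ) (hn : 6 ≤ n) (h : l = n ∨ l = n+1) : ¬ LHedge n r (n-3) l := by
  obtain ⟨m, rfl⟩ : ∃ m, n = m + 6 := ⟨n - 6, by omega⟩
  simp only [LHedge, Hedge, HE, LHE, true_and, and_true, false_and, and_false, true_or,
    or_true, false_or, or_false, ne_eq, not_true, not_false_eq_true] <;> omega

lemma pair_obstruction {S : Set (Finset ℕ)} (h : HasLQ S) {u w : Finset ℕ}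
    (hu : u ∈ S) (hw : w ∈ S) (huw : u ≠ w) :
    (∃ f ∈ S, ∃ v, f \ w = {v} ∧ v ∈ u \ w) ∨
    (∃ f ∈ S, ∃ v, f \ u = {v} ∧ v ∈ w \ u) := by
  obtain ⟨L, -, hmem, hLQ⟩ := h
  obtain ⟨i, hi⟩ := List.mem_iff_get.mp ((hmem u).mpr hu)
  obtain ⟨j, hj⟩ := List.mem_iff_get.mp ((hmem w).mpr hw)
  rcases lt_trichotomy i j with h1 | h1 | h1
  · left
    obtain ⟨p, _, v, hv1, hv2⟩ := hLQ i j h1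
    refine ⟨L.get p, (hmem _).mp (L.get_mem p), v, ?_, ?_⟩
    · rw [hj] at hv1; exact hv1
    · rw [hi, hj] at hv2; exact hv2
  · exact absurd (hi ▸ h1 ▸ hj) huw
  · right
    obtain ⟨p, _, v, hv1, hv2⟩ := hLQ j i h1
    refine ⟨L.get p, (hmem _).mp (L.get_mem p), v, ?_, ?_⟩
    · rw [hi] at hv1; exact hv1
    · rw [hi, hj] at hv2; exact hv2

lemma small_card (n k v : ℕ) (hk1 : 2 ≤ k) :
    (insert 1 (insert (n-3) (insert v (Finset.Icc 3 k)))).card ≤ k + 1 := by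
  calc (insert 1 (insert (n-3) (insert v (Finset.Icc 3 k)))).card
      ≤ (insert (n-3) (insert v (Finset.Icc 3 k))).card + 1 := Finset.card_insert_le _ _
    _ ≤ ((insert v (Finset.Icc 3 k)).card + 1) + 1 :=
        Nat.add_le_add_right (Finset.card_insert_le _ _) 1
    _ ≤ (((Finset.Icc 3 k).card + 1) + 1) + 1 :=
        Nat.add_le_add_right (Nat.add_le_add_right (Finset.card_insert_le _ _) 1) 1
    _ = k + 1 := by rw [Nat.card_Icc]; omega

lemma noP_uw (n r k : ℕ) (hn : 6 ≤ n) (hr : 1 ≤ r) (hk1 : 2 ≤ k) (hk2 : k ≤ n - 4) :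
    ¬ ∃ f ∈ hsGens (LHedge n r) (Finset.Icc 1 (n+r)) k,
      ∃ v, f \ wSet n k = {v} ∧ v ∈ uSet n k \ wSet n k := by
  rintro ⟨f, ⟨-, hcard, t, htf, ⟨l0, hl0f, htl0⟩, hwit⟩, v, hdiff, hv⟩
  rw [Finset.mem_sdiff, mem_uSet, mem_wSet] at hv
  have hv2 : v = n-2 ∨ v = n-1 := by omega
  have hvf : v ∈ f := (Finset.mem_sdiff.mp (hdiff ▸ Finset.mem_singleton_self v)).1
  have hsub : ∀ a ∈ f, (1 ≤ a ∧ a ≤ k ∧ a ≠ 2) ∨ a = n-3 ∨ a = n ∨ a = n+1 ∨ a = v := by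
    intro a ha
    by_cases h : a ∈ wSet n k
    · rw [mem_wSet] at h; omega
    · have h2 : a ∈ f \ wSet n k := Finset.mem_sdiff.mpr ⟨ha, h⟩
      rw [hdiff, Finset.mem_singleton] at h2; omega
  have hl := hsub l0 hl0f
  rcases hsub t htf with htc | ht3 | htn | htn1 | htv
  · -- t small: need n ∈ f or n+1 ∈ f
    have hnf : n ∈ f ∨ n + 1 ∈ f := by
      by_contra hno
      push_neg at hno
      have hsubs : f ⊆ insert 1 (insert (n-3) (insert v (Finset.Icc 3 k))) := by
        intro a ha
        have ha1 := hsub a ha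
        have ha2 : a ≠ n := fun h => hno.1 (h ▸ ha)
        have ha3 : a ≠ n + 1 := fun h => hno.2 (h ▸ ha)
        simp only [Finset.mem_insert, Finset.mem_Icc]
        omega
      have := (Finset.card_le_card hsubs).trans (small_card n k v hk1)
      omega
    rcases hnf with h | h
    · exact hwit n h (by omega) (adjN n r t (by omega) (by omega) (by omega) (by omega))
    · exact hwit (n+1) h (by omega) (adjN1 n r t hr (by omega) (by omega) (by omega))
  · -- t = n-3
    rw [ht3] at hwit
    rcases hv2 with hv' | hv'
    · rw [hv'] at hvf; exact hwit (n-2) hvf (by omega) (adj32 n r)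
    · rw [hv'] at hvf; exact hwit (n-1) hvf (by omega) (adj31 n r hn)
  · -- t = n
    have hl0 : l0 = n + 1 := by omega
    rw [hl0] at hl0f htl0
    rw [htn] at hwit htl0
    exact hwit (n+1) hl0f htl0 (adjN1 n r n hr (by omega) le_rfl (by omega))
  · -- t = n+1
    omega
  · -- t = v
    have hl0 : l0 = n ∨ l0 = n + 1 := by omega
    rcases hl0 with hl' | hl'
    · rw [hl'] at hl0f htl0
      exact hwit n hl0f htl0 (adjN n r t (by omega) (by omega) (by omega) (by omega))
    · rw [hl'] at hl0f htl0
      exact hwit (n+1) hl0f htl0 (adjN1 n r t hr (by omega) (by omega) (by omega))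

lemma noP_wu (n r k : ℕ) (hn : 6 ≤ n) (hr : 1 ≤ r) (hk1 : 2 ≤ k) (hk2 : k ≤ n - 4) :
    ¬ ∃ f ∈ hsGens (LHedge n r) (Finset.Icc 1 (n+r)) k,
      ∃ v, f \ uSet n k = {v} ∧ v ∈ wSet n k \ uSet n k := by
  rintro ⟨f, ⟨-, hcard, t, htf, ⟨l0, hl0f, htl0⟩, hwit⟩, v, hdiff, hv⟩
  rw [Finset.mem_sdiff, mem_wSet, mem_uSet] at hv
  have hv2 : v = n ∨ v = n+1 := by omega
  have hvf : v ∈ f := (Finset.mem_sdiff.mp (hdiff ▸ Finset.mem_singleton_self v)).1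
  have hsub : ∀ a ∈ f, (1 ≤ a ∧ a ≤ k ∧ a ≠ 2) ∨ a = n-3 ∨ a = n-2 ∨ a = n-1 ∨ a = v := by
    intro a ha
    by_cases h : a ∈ uSet n k
    · rw [mem_uSet] at h; omega
    · have h2 : a ∈ f \ uSet n k := Finset.mem_sdiff.mpr ⟨ha, h⟩
      rw [hdiff, Finset.mem_singleton] at h2; omega
  have hl := hsub l0 hl0f
  rcases hsub t htf with htc | ht3 | ht2 | ht1 | htv
  · -- t small
    rcases hv2 with hv' | hv'
    · rw [hv'] at hvf
      exact hwit n hvf (by omega) (adjN n r t (by omega) (by omega) (by omega) (by omega))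
    · rw [hv'] at hvf
      exact hwit (n+1) hvf (by omega) (adjN1 n r t hr (by omega) (by omega) (by omega))
  · -- t = n-3 : need n-2 ∈ f or n-1 ∈ f
    rw [ht3] at hwit
    have hnf : n-2 ∈ f ∨ n-1 ∈ f := by
      by_contra hno
      push_neg at hno
      have hsubs : f ⊆ insert 1 (insert (n-3) (insert v (Finset.Icc 3 k))) := by
        intro a ha
        have ha1 := hsub a ha
        have ha2 : a ≠ n-2 := fun h => hno.1 (h ▸ ha)
        have ha3 : a ≠ n-1 := fun h => hno.2 (h ▸ ha)
        simp only [Finset.mem_insert, Finset.mem_Icc]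
        omega
      have := (Finset.card_le_card hsubs).trans (small_card n k v hk1)
      omega
    rcases hnf with h | h
    · exact hwit (n-2) h (by omega) (adj32 n r)
    · exact hwit (n-1) h (by omega) (adj31 n r hn)
  · -- t = n-2
    rw [ht2] at hwit
    rcases hv2 with hv' | hv'
    · rw [hv'] at hvf
      exact hwit n hvf (by omega) (adjN n r (n-2) (by omega) (by omega) (by omega) (by omega))
    · rw [hv'] at hvf
      exact hwit (n+1) hvf (by omega) (adjN1 n r (n-2) hr (by omega) (by omega) (by omega))
  · -- t = n-1
    rw [ht1] at hwit
    rcases hv2 with hv' | hv'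
    · rw [hv'] at hvf
      exact hwit n hvf (by omega) (adjN n r (n-1) (by omega) (by omega) (by omega) (by omega))
    · rw [hv'] at hvf
      exact hwit (n+1) hvf (by omega) (adjN1 n r (n-1) hr (by omega) (by omega) (by omega))
  · -- t = v
    omega

end AuxLQ

/-- For `n ≥ 6`, `r ≥ 1` and `2 ≤ k ≤ n-4`, the ideal
`HS_k(I(LH_{n,r}ᶜ))` does not have linear quotients. -/
theorem LH_no_LQ (n r k : ℕ) (hn : 6 ≤ n) (hr : 1 ≤ r) (hk1 : 2 ≤ k) (hk2 : k ≤ n - 4) :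
    ¬ HasLQ (hsGens (LHedge n r) (Finset.Icc 1 (n + r)) k) := by
  intro hLQ
  have huS : uSet n k ∈ hsGens (LHedge n r) (Finset.Icc 1 (n + r)) k := by
    refine ⟨?_, ?_, 1, by rw [mem_uSet]; omega,
      ⟨n-3, by rw [mem_uSet]; omega, by omega⟩, ?_⟩
    · intro a ha; rw [mem_uSet] at ha; rw [Finset.mem_Icc]; omega
    · rw [uSet, Finset.card_insert_of_notMem, Finset.card_insert_of_notMem,
        Finset.card_insert_of_notMem, Finset.card_insert_of_notMem, Nat.card_Icc]
      · omega
      · simp only [Finset.mem_Icc]; omega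
      · simp only [Finset.mem_insert, Finset.mem_Icc]; omega
      · simp only [Finset.mem_insert, Finset.mem_Icc]; omega
      · simp only [Finset.mem_insert, Finset.mem_Icc]; omega
    · intro l hl hl1
      rw [mem_uSet] at hl
      exact nadj1 n r l hn (by omega) (by omega)
  have hwS : wSet n k ∈ hsGens (LHedge n r) (Finset.Icc 1 (n + r)) k := by
    refine ⟨?_, ?_, n-3, by rw [mem_wSet]; omega,
      ⟨n, by rw [mem_wSet]; omega, by omega⟩, ?_⟩
    · intro a ha; rw [mem_wSet] at ha; rw [Finset.mem_Icc]; omega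
    · rw [wSet, Finset.card_insert_of_notMem, Finset.card_insert_of_notMem,
        Finset.card_insert_of_notMem, Finset.card_insert_of_notMem, Nat.card_Icc]
      · omega
      · simp only [Finset.mem_Icc]; omega
      · simp only [Finset.mem_insert, Finset.mem_Icc]; omega
      · simp only [Finset.mem_insert, Finset.mem_Icc]; omega
      · simp only [Finset.mem_insert, Finset.mem_Icc]; omega
    · intro l hl hl1
      rw [mem_wSet] at hl
      exact nadj3 n r l hn (by omega)
  have hne : uSet n k ≠ wSet n k := by
    intro h
    have h1 : n-2 ∈ uSet n k := by rw [mem_uSet]; omega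
    rw [h, mem_wSet] at h1; omega
  rcases pair_obstruction hLQ huS hwS hne with h | h
  · exact noP_uw n r k hn hr hk1 hk2 h
  · exact noP_wu n r k hn hr hk1 hk2 h
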